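/- Let μ = (μ_1 ≥ … ≥ μ_r > 0) be a Young diagram, k ≥ 1, and 1 ≤ i ≤ r+k, with the convention μ_l = 0 for l > r. Let m be the least integer j ≥ 0 such that either j = i−1 or μ_{i−j−1} + j ≥ μ_i + k − 1, and let δ be the sequence (μ_1, …, μ_{i−m−1}, μ_i+k−m, μ_{i−m}+1, …, μ_{i−1}+1, μ_{i+1}, …, μ_r). Then: (1) there exists a Young diagram λ containing μ such that λ∖μ is a border strip of size k whose lowest row is row i if and only if δ is nonincreasing; (2) in that case such λ is unique, it equals δ, and ht(λ∖μ) = m+1. -/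

import Mathlib

/-- The length of row `i` (1-indexed) of a Young diagram given as a list;
rows beyond the list have length `0`. -/
def rowLen (lam : List ℕ) (i : ℕ) : ℕ := lam.getD (i - 1) 0

/-- A Young diagram: a nonincreasing finite sequence of positive integers. -/
def IsYoung (lam : List ℕ) : Prop := lam.Pairwise (· ≥ ·) ∧ ∀ x ∈ lam, 0 < x

/-- `(l, c)` (row `l`, column `c`, both 1-indexed) is a cell of `lam`. -/
def IsCell (lam : List ℕ) (p : ℕ × ℕ) : Prop :=
  1 ≤ p.1 ∧ 1 ≤ p.2 ∧ p.2 ≤ rowLen lam p.1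

/-- `mu ⊆ lam`: `mu` has at most as many rows and `mu_l ≤ lam_l` for every `l`. -/
def YoungContains (mu lam : List ℕ) : Prop :=
  mu.length ≤ lam.length ∧ ∀ l : ℕ, rowLen mu l ≤ rowLen lam l

/-- The skew diagram `lam \ mu`: cells of `lam` that are not cells of `mu`. -/
def skewCells (lam mu : List ℕ) : Set (ℕ × ℕ) := {p | IsCell lam p ∧ ¬ IsCell mu p}

/-- Two cells share an edge (differ by exactly 1 in exactly one coordinate). -/
def CellAdj (u v : ℕ × ℕ) : Prop :=
  (u.1 = v.1 ∧ (u.2 + 1 = v.2 ∨ v.2 + 1 = u.2)) ∨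
  (u.2 = v.2 ∧ (u.1 + 1 = v.1 ∨ v.1 + 1 = u.1))

/-- A border strip: a nonempty, edge-connected set of cells with no 2×2 square. -/
def IsBorderStrip (S : Set (ℕ × ℕ)) : Prop :=
  S.Nonempty ∧
  (∀ x ∈ S, ∀ y ∈ S, Relation.ReflTransGen (fun a b => b ∈ S ∧ CellAdj a b) x y) ∧
  ¬ ∃ l c : ℕ, (l, c) ∈ S ∧ (l, c + 1) ∈ S ∧ (l + 1, c) ∈ S ∧ (l + 1, c + 1) ∈ S

/-- The height of a skew diagram: the number of rows containing one of its cells. -/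
noncomputable def stripHeight (S : Set (ℕ × ℕ)) : ℕ := {l : ℕ | ∃ c, (l, c) ∈ S}.ncard

/-- Row `i` is the lowest row of `S`. -/
def LowestRow (S : Set (ℕ × ℕ)) (i : ℕ) : Prop :=
  (∃ c, (i, c) ∈ S) ∧ ∀ l : ℕ, (∃ c, (l, c) ∈ S) → l ≤ i

/-- The candidate diagram `δ = (μ₁, …, μ_{i−m−1}, μ_i+k−m, μ_{i−m}+1, …, μ_{i−1}+1,
μ_{i+1}, …, μ_r)`, as a list of row lengths. -/
def deltaList (mu : List ℕ) (k i m : ℕ) : List ℕ :=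
  (List.range (max i mu.length)).map fun l0 =>
    let t := l0 + 1
    if t < i - m then rowLen mu t
    else if t = i - m then rowLen mu i + k - m
    else if t ≤ i then rowLen mu (t - 1) + 1
    else rowLen mu t

-- infra
lemma sorted_getD_le {L : List ℕ} (hL : L.Pairwise (· ≥ ·)) {a b : ℕ} (hab : a ≤ b) :
    L.getD b 0 ≤ L.getD a 0 := by
  rcases lt_or_ge b L.length with hb | hb
  · have ha : a < L.length := lt_of_le_of_lt hab hb
    rw [List.getD_eq_getElem _ _ hb, List.getD_eq_getElem _ _ ha]
    rcases eq_or_lt_of_le hab with h | h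
    · subst h; exact le_refl _
    · exact List.Pairwise.rel_get_of_lt hL (by simpa using h)
  · rw [List.getD_eq_default _ _ hb]; exact Nat.zero_le _

lemma rowLen_anti {L : List ℕ} (hL : L.Pairwise (· ≥ ·)) {a b : ℕ} (hab : a ≤ b) :
    rowLen L b ≤ rowLen L a := sorted_getD_le hL (Nat.sub_le_sub_right hab 1)

lemma rowLen_eq_zero {L : List ℕ} {l : ℕ} (h : L.length < l) : rowLen L l = 0 :=
  List.getD_eq_default _ _ (by omega)

lemma rowLen_pos {L : List ℕ} (hY : IsYoung L) {l : ℕ} (h1 : 1 ≤ l) (h2 : l ≤ L.length) :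
    0 < rowLen L l := by
  have hl : l - 1 < L.length := by omega
  rw [rowLen, List.getD_eq_getElem _ _ hl]
  exact hY.2 _ (List.getElem_mem hl)

lemma le_length_of_rowLen_pos {L : List ℕ} {l : ℕ} (h : 0 < rowLen L l) : l ≤ L.length := by
  by_contra hc
  rw [rowLen_eq_zero (by omega)] at h; omega

lemma mem_skew {lam mu : List ℕ} {p : ℕ × ℕ} :
    p ∈ skewCells lam mu ↔ 1 ≤ p.1 ∧ rowLen mu p.1 < p.2 ∧ p.2 ≤ rowLen lam p.1 := by
  simp only [skewCells, Set.mem_setOf_eq, IsCell]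
  omega

lemma cellAdj_symm {u v : ℕ × ℕ} (h : CellAdj u v) : CellAdj v u := by
  unfold CellAdj at *; tauto

lemma rtg_mem {S : Set (ℕ × ℕ)} {x y : ℕ × ℕ}
    (h : Relation.ReflTransGen (fun a b => b ∈ S ∧ CellAdj a b) x y) (hx : x ∈ S) : y ∈ S := by
  induction h with
  | refl => exact hx
  | tail _ h2 _ => exact h2.1

lemma rtg_symm {S : Set (ℕ × ℕ)} {x y : ℕ × ℕ} (hx : x ∈ S)
    (h : Relation.ReflTransGen (fun a b => b ∈ S ∧ CellAdj a b) x y) :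
    Relation.ReflTransGen (fun a b => b ∈ S ∧ CellAdj a b) y x := by
  induction h with
  | refl => exact Relation.ReflTransGen.refl
  | tail h1 h2 ih =>
    exact Relation.ReflTransGen.head ⟨rtg_mem h1 hx, cellAdj_symm h2.2⟩ ih

lemma rtg_row_cross {S : Set (ℕ × ℕ)} {x y : ℕ × ℕ}
    (h : Relation.ReflTransGen (fun a b => b ∈ S ∧ CellAdj a b) x y) (hx : x ∈ S)
    {l : ℕ} (h1 : x.1 ≤ l) (h2 : l ≤ y.1) : ∃ c, (l, c) ∈ S := by
  induction h with
  | refl =>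
    have : x.1 = l := le_antisymm h1 h2
    exact ⟨x.2, by rwa [← this]⟩
  | @tail b y h1' h2' ih =>
    rcases le_or_gt l b.1 with hb | hb
    · exact ih hb
    · have hy : y.1 = l := by
        rcases h2'.2 with ⟨_, _⟩ | ⟨_, hr⟩
        · omega
        · omega
      exact ⟨y.2, by rw [← hy]; exact h2'.1⟩

lemma rtg_no_cross {lam mu : List ℕ} {l : ℕ}
    (hcut : rowLen lam (l + 1) ≤ rowLen mu l) {x y : ℕ × ℕ}
    (h : Relation.ReflTransGen (fun a b => b ∈ skewCells lam mu ∧ CellAdj a b) x y)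
    (hx : x ∈ skewCells lam mu) (hx1 : l + 1 ≤ x.1) : l + 1 ≤ y.1 := by
  induction h with
  | refl => exact hx1
  | @tail b y h1' h2' ih =>
    by_contra hc
    have hb : b ∈ skewCells lam mu := rtg_mem h1' hx
    have hby := h2'.2
    have hyS := mem_skew.mp h2'.1
    have hbS := mem_skew.mp hb
    rcases hby with ⟨he, _⟩ | ⟨he, hr⟩
    · omega
    · -- vertical step: rows differ by one, same column
      have hy1 : y.1 = l := by omega
      have hb1 : b.1 = l + 1 := by omega
      rw [hy1] at hyS
      rw [hb1] at hbS
      omega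

lemma delta_length (mu : List ℕ) (k i m : ℕ) :
    (deltaList mu k i m).length = max i mu.length := by
  simp [deltaList]

lemma rowLen_delta (mu : List ℕ) (k i m t : ℕ) (ht : 1 ≤ t) :
    rowLen (deltaList mu k i m) t =
      if t < i - m then rowLen mu t
      else if t = i - m then rowLen mu i + k - m
      else if t ≤ i then rowLen mu (t - 1) + 1
      else rowLen mu t := by
  rcases le_or_gt t (max i mu.length) with h | h
  · have ht' : t - 1 < (deltaList mu k i m).length := by rw [delta_length]; omega
    rw [rowLen, List.getD_eq_getElem _ _ ht']
    simp only [deltaList, List.getElem_map, List.getElem_range]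
    have h1 : t - 1 + 1 = t := by omega
    rw [h1]
  · have h1 : rowLen (deltaList mu k i m) t = 0 :=
      rowLen_eq_zero (by rw [delta_length]; omega)
    have h2 : rowLen mu t = 0 := rowLen_eq_zero (by omega)
    have h3 : ¬ t < i - m := by omega
    have h4 : t ≠ i - m := by omega
    have h5 : ¬ t ≤ i := by omega
    simp [h1, h2, h3, h4, h5]

lemma rows_skew (mu lam : List ℕ) (h i : ℕ)
    (hrows : ∀ l, 1 ≤ l → (rowLen mu l < rowLen lam l ↔ h ≤ l ∧ l ≤ i)) (h1 : 1 ≤ h) :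
    {l : ℕ | ∃ c, (l, c) ∈ skewCells lam mu} = Set.Icc h i := by
  ext l
  simp only [Set.mem_setOf_eq, Set.mem_Icc, mem_skew]
  constructor
  · rintro ⟨c, hl, hc1, hc2⟩
    exact (hrows l hl).mp (by omega)
  · rintro ⟨ha, hb⟩
    have h2 := (hrows l (by omega)).mpr ⟨ha, hb⟩
    exact ⟨rowLen mu l + 1, by omega, by omega, by omega⟩

lemma card_skew (mu lam : List ℕ) (h i : ℕ) (h1 : 1 ≤ h) (hhi : h ≤ i)
    (hcont : ∀ l, rowLen mu l ≤ rowLen lam l)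
    (hrows : ∀ l, 1 ≤ l → (rowLen mu l < rowLen lam l ↔ h ≤ l ∧ l ≤ i))
    (hmid : ∀ l, h < l → l ≤ i → rowLen lam l = rowLen mu (l - 1) + 1) :
    (skewCells lam mu).ncard + rowLen mu i = rowLen lam h + (i - h) := by
  classical
  set F : Finset (ℕ × ℕ) := (Finset.Icc h i).biUnion
      (fun l => (Finset.Ioc (rowLen mu l) (rowLen lam l)).image (fun c => (l, c))) with hF
  have hSF : skewCells lam mu = ↑F := by
    ext ⟨a, b⟩
    simp only [Finset.mem_coe, hF, Finset.mem_biUnion, Finset.mem_Icc,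
      Finset.mem_image, Finset.mem_Ioc, mem_skew]
    constructor
    · rintro ⟨hp1, hp2, hp3⟩
      have := (hrows a hp1).mp (by omega)
      exact ⟨a, by omega, b, ⟨hp2, hp3⟩, rfl⟩
    · rintro ⟨l, ⟨hl1, hl2⟩, c, ⟨hc1, hc2⟩, heq⟩
      injection heq with e1 e2
      subst e1; subst e2
      exact ⟨by omega, hc1, hc2⟩
  have hdisj : ∀ l1 ∈ Finset.Icc h i, ∀ l2 ∈ Finset.Icc h i, l1 ≠ l2 →
      Disjoint ((Finset.Ioc (rowLen mu l1) (rowLen lam l1)).image (fun c => (l1, c)))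
        ((Finset.Ioc (rowLen mu l2) (rowLen lam l2)).image (fun c => (l2, c))) := by
    intro l1 _ l2 _ hne
    rw [Finset.disjoint_left]
    rintro p hp1 hp2
    simp only [Finset.mem_image] at hp1 hp2
    obtain ⟨c1, _, rfl⟩ := hp1
    obtain ⟨c2, _, he⟩ := hp2
    injection he with e1 e2
    exact hne e1.symm
  have hcardF : F.card = ∑ l ∈ Finset.Icc h i, (rowLen lam l - rowLen mu l) := by
    rw [hF, Finset.card_biUnion hdisj]
    refine Finset.sum_congr rfl fun l _ => ?_
    rw [Finset.card_image_of_injective _ (fun a b e => by simpa using congrArg Prod.snd e),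
      Nat.card_Ioc]
  have hsum1 : (∑ l ∈ Finset.Icc h i, (rowLen lam l - rowLen mu l)) +
      ∑ l ∈ Finset.Icc h i, rowLen mu l = ∑ l ∈ Finset.Icc h i, rowLen lam l := by
    rw [← Finset.sum_add_distrib]
    exact Finset.sum_congr rfl fun l _ => Nat.sub_add_cancel (hcont l)
  have hins1 : Finset.Icc h i = insert h (Finset.Icc (h+1) i) := by
    ext x; simp only [Finset.mem_Icc, Finset.mem_insert]; omega
  have hsum2 : ∑ l ∈ Finset.Icc h i, rowLen lam l
      = rowLen lam h + ∑ l ∈ Finset.Icc (h+1) i, rowLen lam l := by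
    rw [hins1, Finset.sum_insert (by simp only [Finset.mem_Icc]; omega)]
  have hins2 : Finset.Icc h i = insert i (Finset.Icc h (i-1)) := by
    ext x; simp only [Finset.mem_Icc, Finset.mem_insert]; omega
  have hsum3 : ∑ l ∈ Finset.Icc h i, rowLen mu l
      = rowLen mu i + ∑ l ∈ Finset.Icc h (i-1), rowLen mu l := by
    rw [hins2, Finset.sum_insert (by simp only [Finset.mem_Icc]; omega)]
  have hsum4 : ∑ l ∈ Finset.Icc (h+1) i, rowLen lam l
      = (∑ l ∈ Finset.Icc h (i-1), rowLen mu l) + (i - h) := by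
    have e1 : ∀ l ∈ Finset.Icc (h+1) i, rowLen lam l = rowLen mu (l-1) + 1 := by
      intro l hl
      simp only [Finset.mem_Icc] at hl
      exact hmid l (by omega) hl.2
    rw [Finset.sum_congr rfl e1, Finset.sum_add_distrib, Finset.sum_const, smul_eq_mul,
      mul_one, Nat.card_Icc]
    congr 1
    · have e2 : Finset.Icc (h+1) i = Finset.map (addRightEmbedding 1) (Finset.Icc h (i-1)) := by
        rw [Finset.map_add_right_Icc]; congr 1; omega
      rw [e2, Finset.sum_map]
      refine Finset.sum_congr rfl fun l _ => ?_
      simp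
    · omega
  rw [hSF, Set.ncard_coe_finset]
  omega

lemma mem_skew' {lam mu : List ℕ} {l c : ℕ} :
    (l, c) ∈ skewCells lam mu ↔ 1 ≤ l ∧ rowLen mu l < c ∧ c ≤ rowLen lam l := mem_skew

lemma construct (mu : List ℕ) (hmu : IsYoung mu) (k : ℕ) (hk : 1 ≤ k)
    (i : ℕ) (hi1 : 1 ≤ i) (hi2 : i ≤ mu.length + k) (m : ℕ)
    (hm : m = i - 1 ∨ rowLen mu i + k - 1 ≤ rowLen mu (i - m - 1) + m)
    (hmin : ∀ j < m, ¬ (j = i - 1 ∨ rowLen mu i + k - 1 ≤ rowLen mu (i - j - 1) + j))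
    (hs : (deltaList mu k i m).Pairwise (· ≥ ·)) :
    IsYoung (deltaList mu k i m) ∧ YoungContains mu (deltaList mu k i m) ∧
    IsBorderStrip (skewCells (deltaList mu k i m) mu) ∧
    (skewCells (deltaList mu k i m) mu).ncard = k ∧
    LowestRow (skewCells (deltaList mu k i m) mu) i ∧
    stripHeight (skewCells (deltaList mu k i m) mu) = m + 1 := by
  have hm1 : m + 1 ≤ i := by
    by_contra hc
    exact hmin (i - 1) (by omega) (Or.inl rfl)
  set d : List ℕ := deltaList mu k i m with hd
  have hC1 : rowLen mu (i - m) + m < rowLen mu i + k := by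
    rcases Nat.eq_zero_or_pos m with rfl | hmpos
    · simpa using by omega
    · have h2 := hmin (m - 1) (by omega)
      push_neg at h2
      have e : i - (m - 1) - 1 = i - m := by omega
      rw [e] at h2
      omega
  -- rowLen formulas for d
  have hDlt : ∀ t, 1 ≤ t → t < i - m → rowLen d t = rowLen mu t := by
    intro t h1 h2
    rw [hd, rowLen_delta mu k i m t h1, if_pos h2]
  have hDh : rowLen d (i - m) = rowLen mu i + k - m := by
    rw [hd, rowLen_delta mu k i m (i - m) (by omega), if_neg (by omega), if_pos rfl]
  have hDmid : ∀ t, i - m < t → t ≤ i → rowLen d t = rowLen mu (t - 1) + 1 := by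
    intro t h1 h2
    rw [hd, rowLen_delta mu k i m t (by omega), if_neg (by omega), if_neg (by omega), if_pos h2]
  have hDgt : ∀ t, i < t → rowLen d t = rowLen mu t := by
    intro t h1
    rw [hd, rowLen_delta mu k i m t (by omega), if_neg (by omega), if_neg (by omega),
      if_neg (by omega)]
  have hmuanti : ∀ a b : ℕ, a ≤ b → rowLen mu b ≤ rowLen mu a := fun a b hab =>
    rowLen_anti hmu.1 hab
  have key : ∀ l, 1 ≤ l → rowLen mu l ≤ rowLen d l := by
    intro l h1
    rcases lt_trichotomy l (i - m) with h | h | h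
    · rw [hDlt l h1 h]
    · subst h; rw [hDh]; omega
    · rcases le_or_gt l i with h2 | h2
      · rw [hDmid l h h2]
        have := hmuanti (l - 1) l (by omega)
        omega
      · rw [hDgt l h2]
  have hcont : ∀ l, rowLen mu l ≤ rowLen d l := by
    intro l
    rcases Nat.eq_zero_or_pos l with rfl | h1
    · exact key 1 le_rfl
    · exact key l h1
  have hrows : ∀ l, 1 ≤ l → (rowLen mu l < rowLen d l ↔ i - m ≤ l ∧ l ≤ i) := by
    intro l h1
    rcases lt_trichotomy l (i - m) with h | h | h
    · rw [hDlt l h1 h]; omega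
    · subst h; rw [hDh]
      constructor
      · intro _; omega
      · intro _; omega
    · rcases le_or_gt l i with h2 | h2
      · rw [hDmid l h h2]
        have := hmuanti (l - 1) l (by omega)
        omega
      · rw [hDgt l h2]; omega
  have hpos : ∀ x ∈ d, 0 < x := by
    intro x hx
    obtain ⟨n, hn, rfl⟩ := List.mem_iff_getElem.mp hx
    have hx2 : rowLen d (n + 1) = d[n] := by
      rw [rowLen, Nat.add_sub_cancel, List.getD_eq_getElem _ _ hn]
    rw [← hx2]
    have hnmax : n + 1 ≤ max i mu.length := by
      have := hn; rw [hd, delta_length] at this; omega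
    rcases le_or_gt (n + 1) (i - m) with h | h
    · have h2 : rowLen d (i - m) ≤ rowLen d (n + 1) := rowLen_anti hs h
      rw [hDh] at h2
      omega
    · rcases le_or_gt (n + 1) i with h2 | h2
      · rw [hDmid (n + 1) h h2]; omega
      · rw [hDgt (n + 1) h2]
        exact rowLen_pos hmu (by omega) (by omega)
  have hyoung : IsYoung d := ⟨hs, hpos⟩
  have hcontains : YoungContains mu d := by
    refine ⟨?_, hcont⟩
    rw [hd, delta_length]
    exact le_max_right _ _
  -- the strip
  have hanchor : ∀ l, i - m ≤ l → l ≤ i → (l, rowLen mu l + 1) ∈ skewCells d mu := by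
    intro l hl1 hl2
    have := (hrows l (by omega)).mpr ⟨hl1, hl2⟩
    exact mem_skew'.mpr ⟨by omega, by omega, by omega⟩
  have hne : (skewCells d mu).Nonempty := ⟨(i, rowLen mu i + 1), hanchor i (by omega) le_rfl⟩
  have h2x2 : ¬ ∃ l c : ℕ, (l, c) ∈ skewCells d mu ∧ (l, c + 1) ∈ skewCells d mu ∧
      (l + 1, c) ∈ skewCells d mu ∧ (l + 1, c + 1) ∈ skewCells d mu := by
    rintro ⟨l, c, p1, _, _, p4⟩
    rw [mem_skew'] at p1 p4
    have hr1 := (hrows l (by omega)).mp (by omega)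
    have hr4 := (hrows (l + 1) (by omega)).mp (by omega)
    have := hDmid (l + 1) (by omega) (by omega)
    simp only [Nat.add_sub_cancel] at this
    omega
  have hhor : ∀ l c e, (l, c) ∈ skewCells d mu → (l, c + e) ∈ skewCells d mu →
      Relation.ReflTransGen (fun a b => b ∈ skewCells d mu ∧ CellAdj a b) (l, c) (l, c + e) := by
    intro l c e
    induction e with
    | zero => intro _ _; exact Relation.ReflTransGen.refl
    | succ e ih =>
      intro h1 h2
      have hm1 := mem_skew'.mp h1
      have hm2 := mem_skew'.mp h2
      have h3 : (l, c + e) ∈ skewCells d mu := mem_skew'.mpr ⟨hm1.1, by omega, by omega⟩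
      exact (ih h1 h3).tail ⟨h2, Or.inl ⟨rfl, Or.inl (by omega)⟩⟩
  have hstep : ∀ l, i - m ≤ l → l + 1 ≤ i →
      Relation.ReflTransGen (fun a b => b ∈ skewCells d mu ∧ CellAdj a b)
        (l + 1, rowLen mu (l + 1) + 1) (l, rowLen mu l + 1) := by
    intro l hl1 hl2
    have hmono := hmuanti l (l + 1) (by omega)
    have ha : (l + 1, rowLen mu (l + 1) + 1) ∈ skewCells d mu := hanchor (l + 1) (by omega) hl2
    have hdl : rowLen d (l + 1) = rowLen mu l + 1 := by
      have := hDmid (l + 1) (by omega) hl2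
      simpa using this
    have hb : (l + 1, rowLen mu l + 1) ∈ skewCells d mu :=
      mem_skew'.mpr ⟨by omega, by omega, by rw [hdl]⟩
    have hc : (l, rowLen mu l + 1) ∈ skewCells d mu := hanchor l hl1 (by omega)
    have e : rowLen mu (l + 1) + 1 + (rowLen mu l - rowLen mu (l + 1)) = rowLen mu l + 1 := by
      omega
    have h1 := hhor (l + 1) (rowLen mu (l + 1) + 1) (rowLen mu l - rowLen mu (l + 1)) ha
      (by rw [e]; exact hb)
    rw [e] at h1
    exact h1.tail ⟨hc, Or.inr ⟨rfl, Or.inr rfl⟩⟩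
  have hchain : ∀ e, e ≤ m →
      Relation.ReflTransGen (fun a b => b ∈ skewCells d mu ∧ CellAdj a b)
        (i, rowLen mu i + 1) (i - e, rowLen mu (i - e) + 1) := by
    intro e
    induction e with
    | zero => intro _; exact Relation.ReflTransGen.refl
    | succ e ih =>
      intro he
      have h1 := ih (by omega)
      have hee : i - (e + 1) + 1 = i - e := by omega
      have h2 := hstep (i - (e + 1)) (by omega) (by omega)
      rw [hee] at h2
      exact h1.trans h2
  have hconn : ∀ x ∈ skewCells d mu, ∀ y ∈ skewCells d mu,
      Relation.ReflTransGen (fun a b => b ∈ skewCells d mu ∧ CellAdj a b) x y := by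
    rintro ⟨lx, cx⟩ hx ⟨ly, cy⟩ hy
    have hmx := mem_skew'.mp hx
    have hmy := mem_skew'.mp hy
    have hrx := (hrows lx (by omega)).mp (by omega)
    have hry := (hrows ly (by omega)).mp (by omega)
    have hax : (lx, rowLen mu lx + 1) ∈ skewCells d mu := hanchor lx hrx.1 hrx.2
    have hay : (ly, rowLen mu ly + 1) ∈ skewCells d mu := hanchor ly hry.1 hry.2
    have ex : rowLen mu lx + 1 + (cx - (rowLen mu lx + 1)) = cx := by omega
    have ey : rowLen mu ly + 1 + (cy - (rowLen mu ly + 1)) = cy := by omega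
    have r1 : Relation.ReflTransGen (fun a b => b ∈ skewCells d mu ∧ CellAdj a b)
        (lx, rowLen mu lx + 1) (lx, cx) := by
      have := hhor lx (rowLen mu lx + 1) (cx - (rowLen mu lx + 1)) hax (by rw [ex]; exact hx)
      rwa [ex] at this
    have r4 : Relation.ReflTransGen (fun a b => b ∈ skewCells d mu ∧ CellAdj a b)
        (ly, rowLen mu ly + 1) (ly, cy) := by
      have := hhor ly (rowLen mu ly + 1) (cy - (rowLen mu ly + 1)) hay (by rw [ey]; exact hy)
      rwa [ey] at this
    have exx : i - (i - lx) = lx := by omega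
    have eyy : i - (i - ly) = ly := by omega
    have r2 : Relation.ReflTransGen (fun a b => b ∈ skewCells d mu ∧ CellAdj a b)
        (i, rowLen mu i + 1) (lx, rowLen mu lx + 1) := by
      have := hchain (i - lx) (by omega)
      rwa [exx] at this
    have r3 : Relation.ReflTransGen (fun a b => b ∈ skewCells d mu ∧ CellAdj a b)
        (i, rowLen mu i + 1) (ly, rowLen mu ly + 1) := by
      have := hchain (i - ly) (by omega)
      rwa [eyy] at this
    exact (rtg_symm hax r1).trans ((rtg_symm (hanchor i (by omega) le_rfl) r2).trans
      (r3.trans r4))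
  have hstrip : IsBorderStrip (skewCells d mu) := ⟨hne, hconn, h2x2⟩
  have hlow : LowestRow (skewCells d mu) i := by
    constructor
    · exact ⟨rowLen mu i + 1, hanchor i (by omega) le_rfl⟩
    · rintro l ⟨c, hc⟩
      have := mem_skew'.mp hc
      exact ((hrows l (by omega)).mp (by omega)).2
  have hcard : (skewCells d mu).ncard = k := by
    have := card_skew mu d (i - m) i (by omega) (by omega) hcont hrows hDmid
    rw [hDh] at this
    have e : i - (i - m) = m := by omega
    rw [e] at this
    omega
  have hheight : stripHeight (skewCells d mu) = m + 1 := by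
    rw [stripHeight, rows_skew mu d (i - m) i hrows (by omega), ← Finset.coe_Icc,
      Set.ncard_coe_finset, Nat.card_Icc]
    omega
  exact ⟨hyoung, hcontains, hstrip, hcard, hlow, hheight⟩

lemma uniq (mu : List ℕ) (hmu : IsYoung mu) (k : ℕ) (hk : 1 ≤ k)
    (i : ℕ) (hi1 : 1 ≤ i) (hi2 : i ≤ mu.length + k) (m : ℕ)
    (hm : m = i - 1 ∨ rowLen mu i + k - 1 ≤ rowLen mu (i - m - 1) + m)
    (hmin : ∀ j < m, ¬ (j = i - 1 ∨ rowLen mu i + k - 1 ≤ rowLen mu (i - j - 1) + j))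
    (lam : List ℕ) (hY : IsYoung lam) (hC : YoungContains mu lam)
    (hB : IsBorderStrip (skewCells lam mu)) (hcard : (skewCells lam mu).ncard = k)
    (hlow : LowestRow (skewCells lam mu) i) : lam = deltaList mu k i m := by
  classical
  obtain ⟨ci, hci⟩ := hlow.1
  have hex : ∃ l, ∃ c, (l, c) ∈ skewCells lam mu := ⟨i, ci, hci⟩
  set h := Nat.find hex with hh
  obtain ⟨ch, hch⟩ := Nat.find_spec hex
  have hmin' : ∀ l < h, ∀ c, (l, c) ∈ skewCells lam mu → False :=
    fun l hl c hc => Nat.find_min hex hl ⟨c, hc⟩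
  have hh1 : 1 ≤ h := (mem_skew'.mp hch).1
  have hhi : h ≤ i := hlow.2 h ⟨ch, hch⟩
  have hfull : ∀ l, h ≤ l → l ≤ i → ∃ c, (l, c) ∈ skewCells lam mu := by
    intro l hl1 hl2
    exact rtg_row_cross (hB.2.1 (h, ch) hch (i, ci) hci) hch hl1 hl2
  have hrowempty : ∀ l, 1 ≤ l → (l < h ∨ i < l) → rowLen lam l = rowLen mu l := by
    intro l h1 h2
    have hne : ¬ rowLen mu l < rowLen lam l := by
      intro hlt
      have hcell : (l, rowLen mu l + 1) ∈ skewCells lam mu :=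
        mem_skew'.mpr ⟨h1, by omega, by omega⟩
      rcases h2 with h2 | h2
      · exact hmin' l h2 _ hcell
      · exact absurd (hlow.2 l ⟨_, hcell⟩) (by omega)
    have := hC.2 l
    omega
  have hrows : ∀ l, 1 ≤ l → (rowLen mu l < rowLen lam l ↔ h ≤ l ∧ l ≤ i) := by
    intro l h1
    constructor
    · intro hlt
      by_contra hcon
      have h2 : l < h ∨ i < l := by omega
      have := hrowempty l h1 h2
      omega
    · rintro ⟨ha, hb⟩
      obtain ⟨c, hc⟩ := hfull l ha hb
      have := mem_skew'.mp hc
      omega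
  have hlamanti : ∀ a b : ℕ, a ≤ b → rowLen lam b ≤ rowLen lam a := fun a b hab =>
    rowLen_anti hY.1 hab
  have hmid : ∀ l, h < l → l ≤ i → rowLen lam l = rowLen mu (l - 1) + 1 := by
    intro l hl1 hl2
    obtain ⟨l', rfl⟩ : ∃ l', l = l' + 1 := ⟨l - 1, by omega⟩
    simp only [Nat.add_sub_cancel]
    have hl'1 : h ≤ l' := by omega
    have hl'2 : l' + 1 ≤ i := hl2
    have hub : rowLen lam (l' + 1) ≤ rowLen mu l' + 1 := by
      by_contra hcon
      push_neg at hcon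
      apply hB.2.2
      have hmono : rowLen lam (l' + 1) ≤ rowLen lam l' := hlamanti l' (l' + 1) (by omega)
      have hmono2 : rowLen mu (l' + 1) ≤ rowLen mu l' := rowLen_anti hmu.1 (by omega)
      refine ⟨l', rowLen mu l' + 1, ?_, ?_, ?_, ?_⟩ <;>
        exact mem_skew'.mpr ⟨by omega, by omega, by omega⟩
    have hlb : rowLen mu l' + 1 ≤ rowLen lam (l' + 1) := by
      by_contra hcon
      push_neg at hcon
      obtain ⟨c, hc⟩ := hfull l' hl'1 (by omega)
      have h5 : l' + 1 ≤ l' :=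
        rtg_no_cross (by omega) (hB.2.1 (i, ci) hci (l', c) hc) hci hl'2
      omega
    omega
  have hkey := card_skew mu lam h i hh1 hhi hC.2 hrows hmid
  rw [hcard] at hkey
  have hcond : (i - h) = i - 1 ∨
      rowLen mu i + k - 1 ≤ rowLen mu (i - (i - h) - 1) + (i - h) := by
    rcases eq_or_lt_of_le hh1 with h1 | h1
    · left; omega
    · right
      have e : i - (i - h) - 1 = h - 1 := by omega
      rw [e]
      have hemp : rowLen lam (h - 1) = rowLen mu (h - 1) := hrowempty (h - 1) (by omega) (by omega)
      have hmono : rowLen lam h ≤ rowLen lam (h - 1) := hlamanti (h - 1) h (by omega)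
      omega
  have hm'le : m ≤ i - h := by
    by_contra hcon
    exact hmin (i - h) (by omega) hcond
  have hmm : m = i - h := by
    rcases eq_or_lt_of_le hm'le with h1 | h1
    · exact h1
    · exfalso
      rcases hm with h2 | h2
      · omega
      · have hl0 : rowLen lam (i - m) = rowLen mu (i - m - 1) + 1 := hmid (i - m) (by omega) (by omega)
        have hmono : rowLen lam (i - m) ≤ rowLen lam h := hlamanti h (i - m) (by omega)
        omega
  have hlen : lam.length = max i mu.length := by
    have hge1 : i ≤ lam.length := by
      have := (hrows i hi1).mpr ⟨hhi, le_rfl⟩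
      exact le_length_of_rowLen_pos (by omega)
    have hge2 : mu.length ≤ lam.length := hC.1
    have hle : lam.length ≤ max i mu.length := by
      by_contra hcon
      push_neg at hcon
      have ht : rowLen lam (max i mu.length + 1) = rowLen mu (max i mu.length + 1) :=
        hrowempty _ (by omega) (by omega)
      have h0 : rowLen mu (max i mu.length + 1) = 0 := rowLen_eq_zero (by omega)
      have := rowLen_pos hY (by omega) (show max i mu.length + 1 ≤ lam.length by omega)
      omega
    omega
  have hrl : ∀ t, 1 ≤ t → rowLen lam t = rowLen (deltaList mu k i m) t := by
    intro t h1
    rw [rowLen_delta mu k i m t h1]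
    have hhe : i - m = h := by omega
    rcases lt_trichotomy t h with h2 | h2 | h2
    · rw [if_pos (by omega)]
      exact hrowempty t h1 (by omega)
    · subst h2
      rw [if_neg (by omega), if_pos (by omega)]
      omega
    · rcases le_or_gt t i with h3 | h3
      · rw [if_neg (by omega), if_neg (by omega), if_pos h3]
        exact hmid t h2 h3
      · rw [if_neg (by omega), if_neg (by omega), if_neg (by omega)]
        exact hrowempty t h1 (by omega)
  apply List.ext_getElem (by rw [hlen, delta_length])
  intro n h1 h2
  have e1 : rowLen lam (n + 1) = lam[n] := by
    rw [rowLen, Nat.add_sub_cancel, List.getD_eq_getElem _ _ h1]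
  have e2 : rowLen (deltaList mu k i m) (n + 1) = (deltaList mu k i m)[n] := by
    rw [rowLen, Nat.add_sub_cancel, List.getD_eq_getElem _ _ h2]
  rw [← e1, ← e2, hrl (n + 1) (by omega)]

/-- Adding a border strip of size `k` with lowest row `i` to a Young diagram `μ`:
it exists iff `δ` is nonincreasing, in which case it is unique, equals `δ`, and the
strip has height `m+1`; here `m` is the least `j ≥ 0` with `j = i−1` or
`μ_{i−j−1} + j ≥ μ_i + k − 1`. -/
theorem borderStrip_add_iff (mu : List ℕ) (hmu : IsYoung mu) (k : ℕ) (hk : 1 ≤ k)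
    (i : ℕ) (hi1 : 1 ≤ i) (hi2 : i ≤ mu.length + k) (m : ℕ)
    (hm : m = i - 1 ∨ rowLen mu i + k - 1 ≤ rowLen mu (i - m - 1) + m)
    (hmin : ∀ j < m, ¬ (j = i - 1 ∨ rowLen mu i + k - 1 ≤ rowLen mu (i - j - 1) + j)) :
    ((∃ lam : List ℕ, IsYoung lam ∧ YoungContains mu lam ∧
        IsBorderStrip (skewCells lam mu) ∧ (skewCells lam mu).ncard = k ∧
        LowestRow (skewCells lam mu) i) ↔
      (deltaList mu k i m).Pairwise (· ≥ ·)) ∧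
    ((deltaList mu k i m).Pairwise (· ≥ ·) →
      (∀ lam : List ℕ, IsYoung lam → YoungContains mu lam →
          IsBorderStrip (skewCells lam mu) → (skewCells lam mu).ncard = k →
          LowestRow (skewCells lam mu) i → lam = deltaList mu k i m) ∧
      stripHeight (skewCells (deltaList mu k i m) mu) = m + 1) := by
  constructor
  · constructor
    · rintro ⟨lam, hY, hC, hB, hcard, hlow⟩
      have heq := uniq mu hmu k hk i hi1 hi2 m hm hmin lam hY hC hB hcard hlow
      rw [← heq]
      exact hY.1
    · intro hs
      obtain ⟨hy, hc, hb, hcard, hlow, _⟩ := construct mu hmu k hk i hi1 hi2 m hm hmin hs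
      exact ⟨_, hy, hc, hb, hcard, hlow⟩
  · intro hs
    obtain ⟨_, _, _, _, _, hh⟩ := construct mu hmu k hk i hi1 hi2 m hm hmin hs
    exact ⟨fun lam a b c d e => uniq mu hmu k hk i hi1 hi2 m hm hmin lam a b c d e, hh⟩
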